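/- (Theorem 1, second part.) For every integer m ≥ 1, the Fibonacci code Fib m is not a (Δ,k)-code. Precisely: there do not exist an integer d ≥ 1 and functions φ₁ : {0,…,d−1} → binary words and φ₂ : ℕ_{≥1} → binary words, all of whose values are nonempty, with φ₁ injective with prefix-free image and φ₂ injective with prefix-free image, such that every codeword w of Fib m can be written as a concatenation w = φ₁(Δ_1)φ₂(k_1) φ₁(Δ_2)φ₂(k_2) ⋯ φ₁(Δ_r)φ₂(k_r) for some nonempty finite sequence of pairs (Δ_1,k_1),…,(Δ_r,k_r) with Δ_j ∈ {0,…,d−1} and k_j ≥ 1. -/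

import Mathlib

/-- The Fibonacci code of order `m`: all binary words having `1^m` as a suffix and
containing `1^m` as a substring only in that suffix position (this includes the
word `1^m` itself). -/
def FibCode (m : ℕ) : Set (List Bool) :=
  {w | List.replicate m true <:+ w ∧
    ∀ u v, w = u ++ List.replicate m true ++ v → v = []}

lemma replicate_comparable (x : Bool) (a b : ℕ) :
    List.replicate a x <+: List.replicate b x ∨ List.replicate b x <+: List.replicate a x := by
  rcases Nat.le_total a b with h | h
  · left
    exact ⟨List.replicate (b - a) x, by rw [← List.replicate_add]; congr 1; omega⟩
  · right
    exact ⟨List.replicate (a - b) x, by rw [← List.replicate_add]; congr 1; omega⟩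

lemma mem_fibCode (m n : ℕ) (hm : 1 ≤ m) :
    (List.replicate n false ++ List.replicate m true) ∈ FibCode m := by
  constructor
  · exact ⟨List.replicate n false, rfl⟩
  · intro u v h
    have hlen : n + m = u.length + (m + v.length) := by
      have := congrArg List.length h
      simpa [List.length_append] using this
    have hu_le : u.length ≤ n := by omega
    have hu : u = List.replicate u.length false := by
      have h2 : u ++ (List.replicate m true ++ v)
          = List.replicate n false ++ List.replicate m true := by
        rw [← List.append_assoc]; exact h.symm
      calc u = (u ++ (List.replicate m true ++ v)).take u.length := List.take_left.symm
        _ = (List.replicate n false ++ List.replicate m true).take u.length := by rw [h2]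
        _ = (List.replicate n false).take u.length :=
            List.take_append_of_le_length (by simpa using hu_le)
        _ = List.replicate u.length false := by
            rw [List.take_replicate]; congr 1; omega
    by_cases hn : u.length = n
    · have : v.length = 0 := by omega
      exact List.eq_nil_of_length_eq_zero this
    · exfalso
      have hlt : u.length < n := lt_of_le_of_ne hu_le hn
      have hsplit : List.replicate n false
          = List.replicate u.length false ++ List.replicate (n - u.length) false := by
        rw [← List.replicate_add]; congr 1; omega
      have h3 : List.replicate u.length false ++
            (List.replicate (n - u.length) false ++ List.replicate m true)
          = List.replicate u.length false ++ (List.replicate m true ++ v) := by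
        rw [← List.append_assoc, ← hsplit]
        rw [← List.append_assoc]
        rw [← hu]
        simpa [List.append_assoc] using h
      have h4 : List.replicate (n - u.length) false ++ List.replicate m true
          = List.replicate m true ++ v := List.append_cancel_left h3
      obtain ⟨k, hk⟩ : ∃ k, n - u.length = k + 1 := ⟨n - u.length - 1, by omega⟩
      obtain ⟨m', hm'⟩ : ∃ m', m = m' + 1 := ⟨m - 1, by omega⟩
      rw [hk, hm'] at h4
      simp [List.replicate_succ] at h4

theorem fibCode_not_deltaK_code (m : ℕ) (hm : 1 ≤ m) :
    ¬ ∃ (d : ℕ) (φ₁ : Fin d → List Bool) (φ₂ : {k : ℕ // 0 < k} → List Bool),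
      1 ≤ d ∧
      (∀ i, φ₁ i ≠ []) ∧ (∀ k, φ₂ k ≠ []) ∧
      Function.Injective φ₁ ∧ Function.Injective φ₂ ∧
      (∀ i j, φ₁ i <+: φ₁ j → i = j) ∧
      (∀ k l, φ₂ k <+: φ₂ l → k = l) ∧
      (∀ w ∈ FibCode m, ∃ ps : List (Fin d × {k : ℕ // 0 < k}),
        ps ≠ [] ∧ w = (ps.map (fun p => φ₁ p.1 ++ φ₂ p.2)).flatten) := by
  rintro ⟨d, φ₁, φ₂, hd, h1ne, h2ne, h1inj, h2inj, h1pf, h2pf, hall⟩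
  -- helper: two all-true values of φ₁ are equal
  have key1 : ∀ i j : Fin d, (∀ b ∈ φ₁ i, b = true) → (∀ b ∈ φ₁ j, b = true) →
      φ₁ i = φ₁ j := by
    intro i j hi hj
    have hi' : φ₁ i = List.replicate (φ₁ i).length true := List.eq_replicate_of_mem hi
    have hj' : φ₁ j = List.replicate (φ₁ j).length true := List.eq_replicate_of_mem hj
    rcases replicate_comparable true (φ₁ i).length (φ₁ j).length with h | h
    · exact congrArg φ₁ (h1pf i j (by rw [hi', hj']; exact h))
    · exact (congrArg φ₁ (h1pf j i (by rw [hi', hj']; exact h))).symm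
  have key2 : ∀ k l : {k : ℕ // 0 < k}, (∀ b ∈ φ₂ k, b = true) → (∀ b ∈ φ₂ l, b = true) →
      φ₂ k = φ₂ l := by
    intro k l hk hl
    have hk' : φ₂ k = List.replicate (φ₂ k).length true := List.eq_replicate_of_mem hk
    have hl' : φ₂ l = List.replicate (φ₂ l).length true := List.eq_replicate_of_mem hl
    rcases replicate_comparable true (φ₂ k).length (φ₂ l).length with h | h
    · exact congrArg φ₂ (h2pf k l (by rw [hk', hl']; exact h))
    · exact (congrArg φ₂ (h2pf l k (by rw [hk', hl']; exact h))).symm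
  -- Step 1: parse 1^m
  obtain ⟨ps, hps_ne, hps⟩ := hall (List.replicate m true)
    (by simpa using mem_fibCode m 0 hm)
  obtain ⟨p₀, ps₀, rfl⟩ := List.exists_cons_of_ne_nil hps_ne
  have hall1 : ∀ p ∈ (p₀ :: ps₀), (∀ b ∈ φ₁ p.1, b = true) ∧ (∀ b ∈ φ₂ p.2, b = true) := by
    intro p hp
    constructor
    · intro b hb
      have : b ∈ List.replicate m true := by
        rw [hps]
        exact List.mem_flatten.2 ⟨φ₁ p.1 ++ φ₂ p.2, List.mem_map_of_mem hp,
          List.mem_append_left _ hb⟩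
      exact List.eq_of_mem_replicate this
    · intro b hb
      have : b ∈ List.replicate m true := by
        rw [hps]
        exact List.mem_flatten.2 ⟨φ₁ p.1 ++ φ₂ p.2, List.mem_map_of_mem hp,
          List.mem_append_right _ hb⟩
      exact List.eq_of_mem_replicate this
  have heq1 : ∀ p ∈ (p₀ :: ps₀), φ₁ p.1 = φ₁ p₀.1 ∧ φ₂ p.2 = φ₂ p₀.2 := by
    intro p hp
    exact ⟨key1 _ _ (hall1 p hp).1 (hall1 p₀ (List.mem_cons_self)).1,
      key2 _ _ (hall1 p hp).2 (hall1 p₀ (List.mem_cons_self)).2⟩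
  set α := (φ₁ p₀.1).length with hα_def
  set β := (φ₂ p₀.2).length with hβ_def
  have hα : 1 ≤ α := List.length_pos_iff.2 (h1ne _)
  have hβ : 1 ≤ β := List.length_pos_iff.2 (h2ne _)
  have hmap1 : (p₀ :: ps₀).map (fun p => φ₁ p.1 ++ φ₂ p.2)
      = List.replicate (ps₀.length + 1) (φ₁ p₀.1 ++ φ₂ p₀.2) := by
    have hmem : ∀ x ∈ (p₀ :: ps₀).map (fun p => φ₁ p.1 ++ φ₂ p.2),
        x = φ₁ p₀.1 ++ φ₂ p₀.2 := by
      rintro x hx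
      obtain ⟨p, hp, rfl⟩ := List.mem_map.1 hx
      rw [(heq1 p hp).1, (heq1 p hp).2]
    have := List.eq_replicate_of_mem hmem
    simpa using this
  have hm1 : m = (ps₀.length + 1) * (α + β) := by
    have := congrArg List.length hps
    rw [hmap1] at this
    simpa [List.length_flatten, List.map_replicate, List.sum_replicate, smul_eq_mul,
      List.length_append, ← hα_def, ← hβ_def] using this
  -- Step 2: parse 0^N 1^m, get an all-false value of φ₁
  set N := ∑ i : Fin d, (φ₁ i).length with hN_def
  obtain ⟨qs, hqs_ne, hqs⟩ := hall (List.replicate N false ++ List.replicate m true)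
    (mem_fibCode m N hm)
  obtain ⟨q₀, qs₀, rfl⟩ := List.exists_cons_of_ne_nil hqs_ne
  have hqpre : φ₁ q₀.1 <+: List.replicate N false ++ List.replicate m true := by
    refine ⟨φ₂ q₀.2 ++ ((qs₀.map fun p => φ₁ p.1 ++ φ₂ p.2).flatten), ?_⟩
    rw [hqs]
    simp [List.append_assoc]
  have hqlen : (φ₁ q₀.1).length ≤ N := by
    rw [hN_def]
    exact Finset.single_le_sum (f := fun i => (φ₁ i).length)
      (fun i _ => Nat.zero_le _) (Finset.mem_univ q₀.1)
  have hq0 : φ₁ q₀.1 = List.replicate (φ₁ q₀.1).length false := by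
    obtain ⟨r, hr⟩ := hqpre
    calc φ₁ q₀.1 = (φ₁ q₀.1 ++ r).take (φ₁ q₀.1).length := List.take_left.symm
      _ = (List.replicate N false ++ List.replicate m true).take (φ₁ q₀.1).length := by rw [hr]
      _ = (List.replicate N false).take (φ₁ q₀.1).length :=
          List.take_append_of_le_length (by simpa using hqlen)
      _ = List.replicate (φ₁ q₀.1).length false := by
          rw [List.take_replicate]; congr 1; omega
  set a := (φ₁ q₀.1).length with ha_def
  have ha : 1 ≤ a := List.length_pos_iff.2 (h1ne _)
  -- Step 3: parse 0^a 1^m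
  obtain ⟨rs, hrs_ne, hrs⟩ := hall (List.replicate a false ++ List.replicate m true)
    (mem_fibCode m a hm)
  obtain ⟨r₀, rs₀, rfl⟩ := List.exists_cons_of_ne_nil hrs_ne
  have hr0pre : φ₁ r₀.1 <+: List.replicate a false ++ List.replicate m true := by
    refine ⟨φ₂ r₀.2 ++ ((rs₀.map fun p => φ₁ p.1 ++ φ₂ p.2).flatten), ?_⟩
    rw [hrs]
    simp [List.append_assoc]
  have hq0pre : φ₁ q₀.1 <+: List.replicate a false ++ List.replicate m true := by
    rw [hq0]
    exact ⟨List.replicate m true, rfl⟩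
  have hidx : r₀.1 = q₀.1 := by
    rcases List.prefix_or_prefix_of_prefix hr0pre hq0pre with h | h
    · exact h1pf _ _ h
    · exact (h1pf _ _ h).symm
  have hcancel : List.replicate m true
      = φ₂ r₀.2 ++ (rs₀.map fun p => φ₁ p.1 ++ φ₂ p.2).flatten := by
    have hval : φ₁ r₀.1 = List.replicate a false := by rw [hidx, hq0]
    apply List.append_cancel_left (as := List.replicate a false)
    calc List.replicate a false ++ List.replicate m true
        = ((r₀ :: rs₀).map fun p => φ₁ p.1 ++ φ₂ p.2).flatten := hrs
      _ = List.replicate a false ++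
          (φ₂ r₀.2 ++ (rs₀.map fun p => φ₁ p.1 ++ φ₂ p.2).flatten) := by
          simp [hval, List.append_assoc]
  have hmem2 : ∀ b ∈ φ₂ r₀.2, b = true := by
    intro b hb
    have : b ∈ List.replicate m true := by
      rw [hcancel]; exact List.mem_append_left _ hb
    exact List.eq_of_mem_replicate this
  have hrest : ∀ p ∈ rs₀, (∀ b ∈ φ₁ p.1, b = true) ∧ (∀ b ∈ φ₂ p.2, b = true) := by
    intro p hp
    constructor
    · intro b hb
      have : b ∈ List.replicate m true := by
        rw [hcancel]
        exact List.mem_append_right _ (List.mem_flatten.2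
          ⟨φ₁ p.1 ++ φ₂ p.2, List.mem_map_of_mem hp, List.mem_append_left _ hb⟩)
      exact List.eq_of_mem_replicate this
    · intro b hb
      have : b ∈ List.replicate m true := by
        rw [hcancel]
        exact List.mem_append_right _ (List.mem_flatten.2
          ⟨φ₁ p.1 ++ φ₂ p.2, List.mem_map_of_mem hp, List.mem_append_right _ hb⟩)
      exact List.eq_of_mem_replicate this
  have hβ' : φ₂ r₀.2 = φ₂ p₀.2 := key2 _ _ hmem2 (hall1 p₀ (List.mem_cons_self)).2
  have hrest_eq : ∀ p ∈ rs₀, φ₁ p.1 = φ₁ p₀.1 ∧ φ₂ p.2 = φ₂ p₀.2 := by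
    intro p hp
    exact ⟨key1 _ _ (hrest p hp).1 (hall1 p₀ (List.mem_cons_self)).1,
      key2 _ _ (hrest p hp).2 (hall1 p₀ (List.mem_cons_self)).2⟩
  have hmap2 : rs₀.map (fun p => φ₁ p.1 ++ φ₂ p.2)
      = List.replicate rs₀.length (φ₁ p₀.1 ++ φ₂ p₀.2) := by
    have hmem : ∀ x ∈ rs₀.map (fun p => φ₁ p.1 ++ φ₂ p.2),
        x = φ₁ p₀.1 ++ φ₂ p₀.2 := by
      rintro x hx
      obtain ⟨p, hp, rfl⟩ := List.mem_map.1 hx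
      rw [(hrest_eq p hp).1, (hrest_eq p hp).2]
    have := List.eq_replicate_of_mem hmem
    simpa using this
  have hm2 : m = β + rs₀.length * (α + β) := by
    have := congrArg List.length hcancel
    rw [hmap2, hβ'] at this
    simpa [List.length_flatten, List.map_replicate, List.sum_replicate, smul_eq_mul,
      List.length_append, ← hα_def, ← hβ_def] using this
  -- final arithmetic contradiction
  set L := ps₀.length + 1 with hL_def
  set t := rs₀.length with ht_def
  set c := α + β with hc_def
  have e1 : L * c = β + t * c := by rw [← hm1, ← hm2]
  have hβc : β < c := by omega
  have h2 : L < t + 1 := by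
    have h2' : L * c < (t + 1) * c := by
      calc L * c = β + t * c := e1
        _ < c + t * c := Nat.add_lt_add_right hβc _
        _ = (t + 1) * c := by rw [Nat.succ_mul, Nat.add_comm]
    exact lt_of_mul_lt_mul_right h2' (Nat.zero_le c)
  have h1 : t < L := by
    have h1' : t * c < L * c := by
      calc t * c < β + t * c := Nat.lt_add_of_pos_left (by omega)
        _ = L * c := e1.symm
    exact lt_of_mul_lt_mul_right h1' (Nat.zero_le c)
  omega
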